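/- Let a, b, c be positive real numbers with d := −a + b − c ≠ 0, and define A(x) := −(x−1)(x − c/d) and B(y) := −(ab/(cd))·(y + c/a)(y − c/b). Then E(A,B,0)(x,y) = 0 for all real x and y. -/

import Mathlib

lemma quad_hasDeriv (p q r x : ℝ) :
    HasDerivAt (fun x : ℝ => p * x ^ 2 + q * x + r) (2 * p * x + q) x := by
  have h1 : HasDerivAt (fun x : ℝ => x ^ 2) (2 * x) x := by
    simpa using hasDerivAt_pow 2 x
  have h := ((h1.const_mul p).add ((hasDerivAt_id x).const_mul q)).add_const r
  rw [show 2 * p * x + q = p * (2 * x) + q * 1 by ring]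
  exact h

lemma quad_deriv1 (p q r : ℝ) :
    deriv (fun x : ℝ => p * x ^ 2 + q * x + r) = fun x => 2 * p * x + q :=
  funext fun x => (quad_hasDeriv p q r x).deriv

lemma lin_deriv (m b : ℝ) : deriv (fun x : ℝ => m * x + b) = fun _ => m := by
  funext x
  simpa using (((hasDerivAt_id x).const_mul m).add_const b).deriv

lemma quad_deriv2 (p q r : ℝ) :
    deriv^[2] (fun x : ℝ => p * x ^ 2 + q * x + r) = fun _ => 2 * p := by
  show deriv (deriv _) = _
  rw [quad_deriv1, lin_deriv]

lemma quad_deriv3 (p q r : ℝ) :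
    deriv^[3] (fun x : ℝ => p * x ^ 2 + q * x + r) = fun _ => 0 := by
  show deriv (deriv (deriv _)) = _
  rw [quad_deriv1, lin_deriv]
  funext x
  simp

/-- The orthotoric expression `E(A,B,λ)(x,y)` associated to profile functions
`A, B : ℝ → ℝ` and a real parameter `λ`:  it equals `(x-y)⁴` times the operator `𝒮`
of the Bismut-Ricci-flat equation evaluated on the orthotoric Kähler ansatz. -/
noncomputable def orthoE (A B : ℝ → ℝ) (lam : ℝ) (x y : ℝ) : ℝ :=
  ((x - y) ^ 2 / 2) *
      (deriv (fun t => A t * deriv^[3] A t) x + deriv (fun t => B t * deriv^[3] B t) y +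
        deriv^[2] A x * deriv^[2] B y) -
    (x - y) *
      (A x * deriv^[3] A x - B y * deriv^[3] B y + deriv A x * deriv^[2] B y -
        deriv B y * deriv^[2] A x) +
    (A x + B y) * (deriv^[2] A x + deriv^[2] B y) -
    (1 / 2) * (deriv A x + deriv B y) ^ 2 - 2 * lam ^ 2


theorem stmt_7 (a b c : ℝ) (ha : 0 < a) (hb : 0 < b) (hc : 0 < c)
    (d : ℝ) (hd : d = -a + b - c) (hd0 : d ≠ 0)
    (A B : ℝ → ℝ)
    (hA : ∀ x, A x = -((x - 1) * (x - c / d)))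
    (hB : ∀ y, B y = -(a * b / (c * d)) * ((y + c / a) * (y - c / b))) :
    ∀ x y : ℝ, orthoE A B 0 x y = 0 := by
  have ha0 : a ≠ 0 := ha.ne'
  have hb0 : b ≠ 0 := hb.ne'
  have hc0 : c ≠ 0 := hc.ne'
  have hA' : A = fun x => (-1) * x ^ 2 + (1 + c / d) * x + (-(c / d)) := by
    funext x; rw [hA]; ring
  have hB' : B = fun y => (-(a * b) / (c * d)) * y ^ 2 + ((a - b) / d) * y + c / d := by
    funext y; rw [hB]; field_simp; ring
  intro x y
  rw [orthoE, hA', hB', quad_deriv1, quad_deriv1, quad_deriv2, quad_deriv2,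
    quad_deriv3, quad_deriv3]
  simp only [mul_zero, zero_mul, deriv_const']
  subst hd
  field_simp
  ring
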